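/- Let A be an n×n complex matrix all of whose eigenvalues have positive real part, and let M be any n×n complex matrix. Then the function s ↦ e^{−sA}·M·e^{−sA} is integrable on [0, ∞), the matrix P = ∫₀^∞ e^{−sA}·M·e^{−sA} ds satisfies the Sylvester equation AP + PA = M, and P is the unique n×n complex matrix with this property. -/

import Mathlib

open Matrix Complex MeasureTheory

section Aux

open NormedSpace Polynomial Module Filter Topology
open scoped ENNReal NNReal

attribute [local instance] Matrix.linftyOpNormedRing Matrix.linftyOpNormedAlgebra
  Matrix.linftyOpNormedSpace

variable {n : ℕ} [Nonempty (Fin n)]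

private noncomputable instance matCENorm : ContinuousENorm (Matrix (Fin n) (Fin n) ℂ) :=
  by exact SeminormedAddGroup.toContinuousENorm
private instance matPMS : TopologicalSpace.PseudoMetrizableSpace (Matrix (Fin n) (Fin n) ℂ) :=
  by exact inferInstanceAs (TopologicalSpace.PseudoMetrizableSpace (Fin n → Fin n → ℂ))

private theorem mulVec_eig (B : Matrix (Fin n) (Fin n) ℂ) (μ : ℂ) (h : μ ∈ spectrum ℂ B) :
    ∃ v, v ≠ 0 ∧ B *ᵥ v = μ • v := by
  rw [← AlgEquiv.spectrum_eq (Matrix.toLinAlgEquiv' (R := ℂ) (n := Fin n))] at h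
  rw [← Module.End.hasEigenvalue_iff_mem_spectrum] at h
  obtain ⟨v, hv⟩ := h.exists_hasEigenvector
  exact ⟨v, hv.right, hv.apply_eq_smul⟩

private theorem exp_mulVec_eig (B : Matrix (Fin n) (Fin n) ℂ) (v : Fin n → ℂ) (μ : ℂ)
    (hv : B *ᵥ v = μ • v) : (exp B) *ᵥ v = Complex.exp μ • v := by
  classical
  let L : Matrix (Fin n) (Fin n) ℂ →ₗ[ℂ] (Fin n → ℂ) :=
    { toFun := fun X => X *ᵥ v
      map_add' := fun X Y => Matrix.add_mulVec X Y v
      map_smul' := fun c X => Matrix.smul_mulVec c X v }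
  have hpow : ∀ k : ℕ, (B ^ k) *ᵥ v = (μ ^ k) • v := by
    intro k
    induction k with
    | zero => simp
    | succ k ih =>
      rw [pow_succ', ← Matrix.mulVec_mulVec, ih, Matrix.mulVec_smul, hv, smul_smul, mul_comm,
        ← pow_succ']
  have hsum : Summable (fun k : ℕ => (k.factorial : ℂ)⁻¹ • B ^ k) :=
    NormedSpace.expSeries_summable' (𝕂 := ℂ) B
  have h1 : (exp B) *ᵥ v = ∑' k : ℕ, ((k.factorial : ℂ)⁻¹ • B ^ k) *ᵥ v := by
    rw [exp_eq_tsum ℂ]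
    exact ((L.toContinuousLinearMap).map_tsum hsum : _)
  rw [h1]
  have h2 : ∀ k : ℕ, ((k.factorial : ℂ)⁻¹ • B ^ k) *ᵥ v
      = ((k.factorial : ℂ)⁻¹ * μ ^ k) • v := by
    intro k
    rw [Matrix.smul_mulVec, hpow, smul_smul]
  rw [tsum_congr h2, Summable.tsum_smul_const]
  · congr 1
    rw [Complex.exp_eq_exp_ℂ, exp_eq_tsum ℂ]
    simp [smul_eq_mul]
  · simpa [smul_eq_mul] using NormedSpace.expSeries_summable' (𝕂 := ℂ) μ

private theorem spectral_mapping_exp (B : Matrix (Fin n) (Fin n) ℂ) (μ : ℂ)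
    (hμ : μ ∈ spectrum ℂ (exp B)) : ∃ l ∈ spectrum ℂ B, μ = Complex.exp l := by
  classical
  obtain ⟨p, hp⟩ : ∃ p : ℂ[X], aeval B p = exp B := by
    suffices h : exp B ∈ Algebra.adjoin ℂ ({B} : Set (Matrix (Fin n) (Fin n) ℂ)) by
      rw [Algebra.adjoin_singleton_eq_range_aeval] at h
      exact h
    set S := Algebra.adjoin ℂ ({B} : Set (Matrix (Fin n) (Fin n) ℂ))
    have hclosed : IsClosed (S : Set (Matrix (Fin n) (Fin n) ℂ)) :=
      (Subalgebra.toSubmodule S).closed_of_finiteDimensional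
    have hs : HasSum (fun k : ℕ => (k.factorial : ℂ)⁻¹ • B ^ k) (exp B) :=
      NormedSpace.exp_series_hasSum_exp' B
    refine hclosed.mem_of_tendsto hs.tendsto_sum_nat ?_
    filter_upwards with m
    refine Subalgebra.toSubmodule S |>.sum_mem fun k _ => Submodule.smul_mem _ _ ?_
    exact Subalgebra.pow_mem S (Algebra.self_mem_adjoin_singleton ℂ B) k
  have hnon : (spectrum ℂ B).Nonempty :=
    spectrum.nonempty_of_isAlgClosed_of_finiteDimensional ℂ B
  rw [← hp, spectrum.map_polynomial_aeval_of_nonempty B p hnon] at hμ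
  obtain ⟨l, hl, hμ⟩ := hμ
  refine ⟨l, hl, ?_⟩
  obtain ⟨v, hv0, hv⟩ := mulVec_eig B l hl
  have hEig : Module.End.HasEigenvector (Matrix.toLinAlgEquiv' B) l v :=
    ⟨Module.End.mem_eigenspace_iff.mpr (by simpa using hv), hv0⟩
  have h1 : (aeval B p) *ᵥ v = (eval l p) • v := by
    have hcomm : aeval (Matrix.toLinAlgEquiv' B) p = Matrix.toLinAlgEquiv' (aeval B p) := by
      exact Polynomial.aeval_algHom_apply
        (Matrix.toLinAlgEquiv' (R := ℂ) (n := Fin n)).toAlgHom B p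
    have := Module.End.aeval_apply_of_hasEigenvector (p := p) hEig
    rw [hcomm] at this
    simpa using this
  have h2 : (exp B) *ᵥ v = Complex.exp l • v := exp_mulVec_eig B v l hv
  rw [hp, h2] at h1
  have := smul_left_injective ℂ hv0 (h1.symm)
  simp only at hμ
  rw [← hμ, this]

private theorem exp_decay (A : Matrix (Fin n) (Fin n) ℂ)
    (hspec : ∀ μ ∈ spectrum ℂ A, 0 < μ.re) :
    ∃ C ε : ℝ, 0 < C ∧ 0 < ε ∧ ∀ s : ℝ, 0 ≤ s →
      ‖exp (-(s • A))‖ ≤ C * Real.exp (-(ε * s)) := by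
  classical
  set Bm := exp (-A) with hBm
  have hsp1 : ∀ μ ∈ spectrum ℂ Bm, ‖μ‖₊ < 1 := by
    intro μ hμ
    obtain ⟨l, hl, rfl⟩ := spectral_mapping_exp (-A) μ hμ
    have hlA : -l ∈ spectrum ℂ A := by
      rw [spectrum.mem_iff] at hl ⊢
      have : algebraMap ℂ (Matrix (Fin n) (Fin n) ℂ) (-l) - A
          = -(algebraMap ℂ (Matrix (Fin n) (Fin n) ℂ) l - (-A)) := by
        rw [map_neg, sub_neg_eq_add, neg_add, ← sub_eq_add_neg]
      rw [this, IsUnit.neg_iff]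
      exact hl
    have hre : l.re < 0 := by
      have := hspec _ hlA
      simp only [Complex.neg_re] at this
      linarith
    have : ‖Complex.exp l‖ < 1 := by
      rw [Complex.norm_exp]
      exact Real.exp_lt_one_iff.mpr hre
    exact_mod_cast this
  have hne : (spectrum ℂ Bm).Nonempty :=
    spectrum.nonempty_of_isAlgClosed_of_finiteDimensional ℂ Bm
  have hρ : spectralRadius ℂ Bm < 1 := by
    have := spectrum.spectralRadius_lt_of_forall_lt_of_nonempty hne (r := 1) hsp1
    simpa using this
  obtain ⟨r, hρr, hr1⟩ := ENNReal.lt_iff_exists_nnreal_btwn.mp hρ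
  have hr1' : (r : ℝ) < 1 := by exact_mod_cast hr1
  have hr0 : 0 < (r : ℝ≥0∞) := lt_of_le_of_lt (zero_le) hρr
  have hr0' : 0 < (r : ℝ) := by exact_mod_cast hr0
  have hgel := spectrum.pow_nnnorm_pow_one_div_tendsto_nhds_spectralRadius Bm
  have hev : ∀ᶠ k : ℕ in Filter.atTop, ((‖Bm ^ k‖₊ : ℝ≥0∞) ^ (1 / (k:ℝ))) < r :=
    hgel.eventually_lt_const hρr
  obtain ⟨N, hN⟩ := Filter.eventually_atTop.mp hev
  have hpow : ∀ k : ℕ, N + 1 ≤ k → ‖Bm ^ k‖ ≤ (r : ℝ) ^ k := by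
    intro k hk
    have hk0 : (k : ℝ) ≠ 0 := by
      have : 0 < k := lt_of_lt_of_le (Nat.succ_pos N) hk
      exact_mod_cast this.ne'
    have h := hN k (le_trans (Nat.le_succ N) hk)
    have h2 := ENNReal.rpow_lt_rpow h (by positivity : (0:ℝ) < (k:ℝ))
    rw [← ENNReal.rpow_mul, one_div_mul_cancel hk0, ENNReal.rpow_one,
      ← ENNReal.coe_rpow_of_nonneg r (by positivity : (0:ℝ) ≤ (k:ℝ)),
      ENNReal.coe_lt_coe] at h2
    have h3 : ‖Bm ^ k‖₊ ≤ r ^ k := by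
      have := h2.le
      rwa [← NNReal.rpow_natCast r k]
    calc ‖Bm ^ k‖ = ((‖Bm ^ k‖₊ : ℝ)) := rfl
      _ ≤ ((r ^ k : ℝ≥0) : ℝ) := by exact_mod_cast h3
      _ = (r : ℝ) ^ k := by push_cast; ring
  set C₁ : ℝ := 1 + ∑ k ∈ Finset.range (N+1), ‖Bm ^ k‖ / (r:ℝ)^k with hC₁
  have hsum0 : 0 ≤ ∑ k ∈ Finset.range (N+1), ‖Bm ^ k‖ / (r:ℝ)^k :=
    Finset.sum_nonneg fun i _ => by positivity
  have hC₁1 : 1 ≤ C₁ := by rw [hC₁]; linarith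
  have hCpow : ∀ k : ℕ, ‖Bm ^ k‖ ≤ C₁ * (r:ℝ)^k := by
    intro k
    rcases le_or_gt (N+1) k with hk | hk
    · calc ‖Bm ^ k‖ ≤ (r:ℝ)^k := hpow k hk
        _ ≤ C₁ * (r:ℝ)^k := le_mul_of_one_le_left (by positivity) hC₁1
    · have hmem : k ∈ Finset.range (N+1) := Finset.mem_range.mpr hk
      have h1 : ‖Bm ^ k‖ / (r:ℝ)^k ≤ C₁ := by
        have := Finset.single_le_sum (f := fun i => ‖Bm ^ i‖ / (r:ℝ)^i)
          (fun i _ => by positivity) hmem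
        rw [hC₁]; linarith
      rw [div_le_iff₀ (by positivity)] at h1
      linarith [h1]
  have hcont : Continuous fun u : ℝ => exp (-(u • A)) :=
    NormedSpace.exp_continuous.comp ((continuous_id.smul continuous_const).neg)
  obtain ⟨K, hK⟩ := (isCompact_Icc (a := (0:ℝ)) (b := 1)).exists_bound_of_continuousOn
    hcont.continuousOn
  set K' : ℝ := max K 1 with hK'
  have hK'0 : 0 < K' := lt_of_lt_of_le one_pos (le_max_right _ _)
  have hK1 : ∀ u ∈ Set.Icc (0:ℝ) 1, ‖exp (-(u • A))‖ ≤ K' :=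
    fun u hu => (hK u hu).trans (le_max_left _ _)
  set ε : ℝ := -Real.log r with hε'
  have hε : 0 < ε := by
    have := Real.log_neg hr0' hr1'
    rw [hε']; linarith
  refine ⟨K' * C₁ / r, ε, by positivity, hε, ?_⟩
  intro s hs
  set k : ℕ := ⌊s⌋₊ with hk
  have hu0 : 0 ≤ s - k := by
    have := Nat.floor_le hs
    linarith
  have hu1 : s - k ≤ 1 := by
    have := Nat.lt_floor_add_one s
    rw [← hk] at this
    linarith
  have hsplit : -(s • A) = (s - k) • (-A) + (k:ℝ) • (-A) := by
    rw [← add_smul, sub_add_cancel, smul_neg]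
  have hexp : exp (-(s • A)) = exp ((s - k) • (-A)) * Bm ^ k := by
    rw [hsplit, Matrix.exp_add_of_commute _ _ (((Commute.refl (-A)).smul_left _).smul_right _),
      Nat.cast_smul_eq_nsmul ℝ k (-A), Matrix.exp_nsmul]
  have hrk : (r:ℝ)^k ≤ Real.exp (-(ε * s)) / r := by
    have hks : (s - 1) ≤ (k:ℝ) := by
      have := Nat.sub_one_lt_floor s
      rw [← hk] at this
      linarith
    have h1 : (r:ℝ) ^ ((k:ℝ)) ≤ (r:ℝ) ^ (s - 1) :=
      Real.rpow_le_rpow_of_exponent_ge hr0' hr1'.le hks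
    rw [Real.rpow_natCast] at h1
    have h2 : (r:ℝ) ^ (s - 1) = (r:ℝ) ^ s / r := by
      rw [Real.rpow_sub hr0', Real.rpow_one]
    have h3 : (r:ℝ) ^ s = Real.exp (-(ε * s)) := by
      rw [Real.rpow_def_of_pos hr0', hε']
      ring_nf
    rw [h2, h3] at h1
    exact h1
  calc ‖exp (-(s • A))‖ ≤ ‖exp ((s - k) • (-A))‖ * ‖Bm ^ k‖ := by
        rw [hexp]; exact norm_mul_le _ _
    _ ≤ K' * (C₁ * (r:ℝ)^k) := by
        refine mul_le_mul ?_ (hCpow k) (norm_nonneg _) hK'0.le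
        have h4 : (s - k) • (-A) = -((s - k) • A) := by rw [smul_neg]
        rw [h4]
        exact hK1 _ ⟨hu0, hu1⟩
    _ ≤ K' * (C₁ * (Real.exp (-(ε * s)) / r)) := by
        refine mul_le_mul_of_nonneg_left (mul_le_mul_of_nonneg_left hrk (by linarith)) hK'0.le
    _ = K' * C₁ / r * Real.exp (-(ε * s)) := by ring

private theorem matrix_integrable (A : Matrix (Fin n) (Fin n) ℂ)
    (hspec : ∀ μ ∈ spectrum ℂ A, 0 < μ.re) (M : Matrix (Fin n) (Fin n) ℂ) :
    IntegrableOn (fun s : ℝ => exp (-(s • A)) * M * exp (-(s • A)))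
      (Set.Ioi 0) MeasureTheory.volume := by
  obtain ⟨C, ε, hC, hε, hbound⟩ := exp_decay A hspec
  have hcontE : Continuous fun s : ℝ => exp (-(s • A)) :=
    NormedSpace.exp_continuous.comp ((continuous_id.smul continuous_const).neg)
  have hcont : Continuous fun s : ℝ => exp (-(s • A)) * M * exp (-(s • A)) :=
    (hcontE.mul continuous_const).mul hcontE
  refine MeasureTheory.Integrable.mono'
    (g := fun s : ℝ => (C * ‖M‖ * C) * Real.exp (-(2 * ε) * s))
    (((exp_neg_integrableOn_Ioi 0 (by positivity : (0:ℝ) < 2 * ε)).const_mul _))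
    hcont.aestronglyMeasurable.restrict ?_
  filter_upwards [ae_restrict_mem measurableSet_Ioi] with s hs
  have hs0 : (0:ℝ) ≤ s := (le_of_lt hs)
  calc ‖exp (-(s • A)) * M * exp (-(s • A))‖
      ≤ ‖exp (-(s • A)) * M‖ * ‖exp (-(s • A))‖ := norm_mul_le _ _
    _ ≤ (‖exp (-(s • A))‖ * ‖M‖) * ‖exp (-(s • A))‖ :=
        mul_le_mul_of_nonneg_right (norm_mul_le _ _) (norm_nonneg _)
    _ ≤ ((C * Real.exp (-(ε * s))) * ‖M‖) * (C * Real.exp (-(ε * s))) := by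
        have h1 := hbound s hs0
        exact mul_le_mul (mul_le_mul_of_nonneg_right h1 (norm_nonneg _)) h1 (norm_nonneg _)
          (by positivity)
    _ = (C * ‖M‖ * C) * Real.exp (-(2 * ε) * s) := by
        rw [show (-(2 * ε) * s) = (-(ε * s)) + (-(ε * s)) by ring, Real.exp_add]
        ring

private theorem matrix_integral_eq (A : Matrix (Fin n) (Fin n) ℂ)
    (hspec : ∀ μ ∈ spectrum ℂ A, 0 < μ.re) (M P' : Matrix (Fin n) (Fin n) ℂ)
    (h : A * P' + P' * A = M) :
    ∫ s in Set.Ioi (0:ℝ), exp (-(s • A)) * M * exp (-(s • A)) = P' := by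
  obtain ⟨C, ε, hC, hε, hbound⟩ := exp_decay A hspec
  set E : ℝ → Matrix (Fin n) (Fin n) ℂ := fun s => exp (-(s • A)) with hE
  have hE' : ∀ s : ℝ, HasDerivAt E (-A * E s) s := by
    intro s
    have h0 : HasDerivAt (fun u : ℝ => exp (u • -A)) (-A * exp (s • -A)) s :=
      hasDerivAt_exp_smul_const' (𝕂 := ℝ) (-A) s
    have h1 : (fun u : ℝ => exp (u • -A)) = E := by
      funext u
      rw [hE, smul_neg]
    rw [h1] at h0
    have h2 : exp (s • -A) = E s := by rw [hE, smul_neg]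
    rwa [h2] at h0
  have hcA : ∀ s : ℝ, A * E s = E s * A := by
    intro s
    have : Commute A (-(s • A)) := ((Commute.refl A).smul_right s).neg_right
    exact this.exp_right.eq
  have hderiv : ∀ s : ℝ, HasDerivAt (fun t => E t * P' * E t) (-(E s * M * E s)) s := by
    intro s
    have hF := ((hE' s).mul_const P').mul (hE' s)
    have key : -A * E s * P' * E s + E s * P' * (-A * E s) = -(E s * M * E s) := by
      have h3 : -A * E s * P' * E s = -(E s * A * P' * E s) := by
        have hcneg : -A * E s = E s * -A := by
          rw [neg_mul, hcA s, mul_neg]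
        rw [hcneg]
        noncomm_ring
      have h2 : E s * P' * (-A * E s) = -(E s * P' * A * E s) := by noncomm_ring
      rw [h3, h2, ← h]
      noncomm_ring
    rwa [key] at hF
  have htend : Tendsto (fun s : ℝ => E s * P' * E s) atTop (𝓝 0) := by
    have hg : Tendsto (fun s : ℝ => (C * ‖P'‖ * C) * Real.exp (-(2 * ε * s))) atTop (𝓝 0) := by
      have h1 : Tendsto (fun s : ℝ => 2 * ε * s) atTop atTop :=
        Tendsto.const_mul_atTop (by positivity) tendsto_id
      have h2 := Real.tendsto_exp_neg_atTop_nhds_zero.comp h1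
      simpa [mul_zero] using h2.const_mul (C * ‖P'‖ * C)
    refine squeeze_zero_norm' ?_ hg
    filter_upwards [eventually_ge_atTop (0:ℝ)] with s hs0
    have h1 := hbound s hs0
    calc ‖E s * P' * E s‖ ≤ ‖E s * P'‖ * ‖E s‖ := norm_mul_le _ _
      _ ≤ (‖E s‖ * ‖P'‖) * ‖E s‖ :=
          mul_le_mul_of_nonneg_right (norm_mul_le _ _) (norm_nonneg _)
      _ ≤ ((C * Real.exp (-(ε * s))) * ‖P'‖) * (C * Real.exp (-(ε * s))) :=
          mul_le_mul (mul_le_mul_of_nonneg_right h1 (norm_nonneg _)) h1 (norm_nonneg _)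
            (by positivity)
      _ = (C * ‖P'‖ * C) * Real.exp (-(2 * ε * s)) := by
          rw [show (-(2 * ε * s)) = (-(ε * s)) + (-(ε * s)) by ring, Real.exp_add]
          ring
  have hint : IntegrableOn (fun s : ℝ => -(E s * M * E s)) (Set.Ioi 0) MeasureTheory.volume :=
    (matrix_integrable A hspec M).neg
  have hFTC := integral_Ioi_of_hasDerivAt_of_tendsto' (a := (0:ℝ))
    (fun x _ => hderiv x) hint htend
  have hE0 : E 0 = 1 := by
    rw [hE]
    simp [NormedSpace.exp_zero]
  rw [hE0] at hFTC
  simp only [one_mul, mul_one, zero_sub] at hFTC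
  rw [integral_neg] at hFTC
  exact neg_injective hFTC

/-- entry evaluation as a continuous linear map -/
private noncomputable def entryCLM (j k : Fin n) : Matrix (Fin n) (Fin n) ℂ →L[ℂ] ℂ :=
  LinearMap.toContinuousLinearMap
    { toFun := fun X : Matrix (Fin n) (Fin n) ℂ => X j k
      map_add' := fun _ _ => rfl
      map_smul' := fun _ _ => rfl }

theorem entry_integrable (A : Matrix (Fin n) (Fin n) ℂ)
    (hspec : ∀ μ ∈ spectrum ℂ A, 0 < μ.re) (M : Matrix (Fin n) (Fin n) ℂ) :
    ∀ j k : Fin n, IntegrableOn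
      (fun s : ℝ => (exp (-(s • A)) * M * exp (-(s • A))) j k)
      (Set.Ioi 0) := by
  intro j k
  exact (entryCLM j k).integrable_comp (matrix_integrable A hspec M)

theorem matrix_P_eq (A : Matrix (Fin n) (Fin n) ℂ)
    (hspec : ∀ μ ∈ spectrum ℂ A, 0 < μ.re) (M P' : Matrix (Fin n) (Fin n) ℂ)
    (h : A * P' + P' * A = M) :
    P' = Matrix.of fun j k => ∫ s in Set.Ioi (0:ℝ),
      (exp (-(s • A)) * M * exp (-(s • A))) j k := by
  ext j k
  have h1 := (entryCLM j k).integral_comp_comm (matrix_integrable A hspec M)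
  rw [matrix_integral_eq A hspec M P' h] at h1
  exact h1.symm

theorem exists_solution (A : Matrix (Fin n) (Fin n) ℂ)
    (hspec : ∀ μ ∈ spectrum ℂ A, 0 < μ.re) (M : Matrix (Fin n) (Fin n) ℂ) :
    ∃ P' : Matrix (Fin n) (Fin n) ℂ, A * P' + P' * A = M := by
  classical
  let Syl : Matrix (Fin n) (Fin n) ℂ →ₗ[ℂ] Matrix (Fin n) (Fin n) ℂ :=
    { toFun := fun X => A * X + X * A
      map_add' := by
        intro X Y
        show A * (X + Y) + (X + Y) * A = (A * X + X * A) + (A * Y + Y * A)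
        noncomm_ring
      map_smul' := by
        intro c X
        show A * (c • X) + (c • X) * A = c • (A * X + X * A)
        rw [Matrix.mul_smul, Matrix.smul_mul, smul_add] }
  have hinj : Function.Injective Syl := by
    intro X Y hXY
    have hXY' : A * (X - Y) + (X - Y) * A = 0 := by
      have heq : A * X + X * A = A * Y + Y * A := hXY
      calc A * (X - Y) + (X - Y) * A = (A * X + X * A) - (A * Y + Y * A) := by noncomm_ring
        _ = 0 := by rw [heq, sub_self]
    have h0 := matrix_integral_eq A hspec 0 (X - Y) (by simpa using hXY')
    have h1 : (X - Y) = 0 := by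
      rw [← h0]
      simp
    exact sub_eq_zero.mp h1
  have hsurj : Function.Surjective Syl := LinearMap.surjective_of_injective hinj
  obtain ⟨P', hP'⟩ := hsurj M
  exact ⟨P', hP'⟩

theorem sylvester_part2 (A : Matrix (Fin n) (Fin n) ℂ)
    (hspec : ∀ μ ∈ spectrum ℂ A, 0 < μ.re) (M : Matrix (Fin n) (Fin n) ℂ) :
    A * (Matrix.of fun j k => ∫ s in Set.Ioi (0 : ℝ),
        (exp (-(s • A)) * M * exp (-(s • A))) j k) +
      (Matrix.of fun j k => ∫ s in Set.Ioi (0 : ℝ),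
        (exp (-(s • A)) * M * exp (-(s • A))) j k) * A = M := by
  obtain ⟨P', hP'⟩ := exists_solution A hspec M
  rw [← matrix_P_eq A hspec M P' hP']
  exact hP'

end Aux

/-- if all eigenvalues of A have positive real part, then
s ↦ e^{−sA} M e^{−sA} is integrable (entrywise) on [0,∞), the entrywise
integral P = ∫₀^∞ e^{−sA} M e^{−sA} ds satisfies AP + PA = M, and P is the
unique matrix with this property. -/
theorem sylvester_solution_integral (n : ℕ)
    (A M : Matrix (Fin n) (Fin n) ℂ)
    (hspec : ∀ μ ∈ spectrum ℂ A, 0 < μ.re) :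
    (∀ j k : Fin n, IntegrableOn
      (fun s : ℝ =>
        (NormedSpace.exp (-(s • A)) * M * NormedSpace.exp (-(s • A))) j k)
      (Set.Ioi 0)) ∧
    (A * (Matrix.of fun j k => ∫ s in Set.Ioi (0 : ℝ),
        (NormedSpace.exp (-(s • A)) * M * NormedSpace.exp (-(s • A))) j k) +
      (Matrix.of fun j k => ∫ s in Set.Ioi (0 : ℝ),
        (NormedSpace.exp (-(s • A)) * M * NormedSpace.exp (-(s • A))) j k) * A
      = M) ∧
    (∀ P' : Matrix (Fin n) (Fin n) ℂ, A * P' + P' * A = M →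
      P' = Matrix.of fun j k => ∫ s in Set.Ioi (0 : ℝ),
        (NormedSpace.exp (-(s • A)) * M * NormedSpace.exp (-(s • A))) j k) := by
  rcases Nat.eq_zero_or_pos n with hn | hn
  · subst hn
    refine ⟨fun j => j.elim0, ?_, ?_⟩
    · ext i j
      exact i.elim0
    · intro P' _
      ext i j
      exact i.elim0
  · haveI : Nonempty (Fin n) := ⟨⟨0, hn⟩⟩
    exact ⟨entry_integrable A hspec M, sylvester_part2 A hspec M,
      fun P' hP' => matrix_P_eq A hspec M P' hP'⟩
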